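/- Let n be even, g = (a,b) ∈ ℤ₂×ℤ₂, and 1 ≤ p < q ≤ n/2. Then the string order parameter factorizes as an ordered product of cluster stabilizers: S_{[p,q]}(g) = ∏_{j=2p}^{2q−1} K_j^{s_j} (factors in increasing order of j), where s_j = a if j is odd and s_j = b if j is even. In particular, S_{[p,q]}(g) |C_n⟩ = |C_n⟩. -/

import Mathlib

open Matrix Complex
open scoped ComplexOrder

noncomputable section

/-- The state space of `n` qubits, as functions on classical bit strings. -/
abbrev QState (n : ℕ) := (Fin n → Fin 2) → ℂ

/-- Operators on `n` qubits: `2^n × 2^n` complex matrices. -/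
abbrev Op (n : ℕ) := Matrix (Fin n → Fin 2) (Fin n → Fin 2) ℂ

/-- The single-qubit Pauli `X` matrix. -/
def Xmat : Matrix (Fin 2) (Fin 2) ℂ := !![0, 1; 1, 0]

/-- The single-qubit Pauli `Z` matrix. -/
def Zmat : Matrix (Fin 2) (Fin 2) ℂ := !![1, 0; 0, -1]

/-- Map a 1-based cyclic site label `j ∈ {1,…,n}` (taken mod `n`) to an index in `Fin n`. -/
def site (n : ℕ) [NeZero n] (j : ℕ) : Fin n :=
  ⟨(j + (n - 1)) % n, Nat.mod_lt _ (Nat.pos_of_ne_zero (NeZero.ne n))⟩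

/-- The operator acting as the single-qubit matrix `M` on qubit `i` and as identity elsewhere. -/
def onSite (n : ℕ) (i : Fin n) (M : Matrix (Fin 2) (Fin 2) ℂ) : Op n :=
  Matrix.of fun s t => (if ∀ k, k ≠ i → s k = t k then 1 else 0) * M (s i) (t i)

/-- Pauli `X` on (1-based, cyclic) site `j`. -/
def PX (n : ℕ) [NeZero n] (j : ℕ) : Op n := onSite n (site n j) Xmat

/-- Pauli `Z` on (1-based, cyclic) site `j`. -/
def PZ (n : ℕ) [NeZero n] (j : ℕ) : Op n := onSite n (site n j) Zmat

/-- The cyclic cluster stabilizer `K_j = Z_{j-1} X_j Z_{j+1}` (for `1 ≤ j ≤ n`). -/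
def Kstab (n : ℕ) [NeZero n] (j : ℕ) : Op n := PZ n (j - 1) * PX n j * PZ n (j + 1)

/-- The symmetry group `ℤ₂ × ℤ₂`. -/
abbrev G2 := ZMod 2 × ZMod 2

/-- The nontrivial element `x = (0,1)` of `ℤ₂ × ℤ₂`. -/
def gx : G2 := (0, 1)

/-- The nontrivial element `y = (1,0)` of `ℤ₂ × ℤ₂`. -/
def gy : G2 := (1, 0)

/-- The nontrivial element `z = (1,1)` of `ℤ₂ × ℤ₂`. -/
def gz : G2 := (1, 1)

/-- The global symmetry representation `U((a,b)) = ∏_{j odd} X_j^a ∏_{j even} X_j^b`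
on `n` qubits (`n` even), written as a product over the `n/2` two-site blocks. -/
def Usym (n : ℕ) [NeZero n] (g : G2) : Op n :=
  ((List.range (n / 2)).map
    (fun p => PX n (2 * p + 1) ^ g.1.val * PX n (2 * p + 2) ^ g.2.val)).prod

/-- Left boundary operator `V^L_p((a,b))`: `Z^b` on qubit `2p-1` and `X^b Z^a` on qubit `2p`. -/
def VL (n : ℕ) [NeZero n] (p : ℕ) (g : G2) : Op n :=
  PZ n (2 * p - 1) ^ g.2.val * (PX n (2 * p) ^ g.2.val * PZ n (2 * p) ^ g.1.val)

/-- Right boundary operator `V^R_p((a,b))`: `Z^b X^a` on qubit `2p-1` and `Z^a` on qubit `2p`. -/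
def VR (n : ℕ) [NeZero n] (p : ℕ) (g : G2) : Op n :=
  (PZ n (2 * p - 1) ^ g.2.val * PX n (2 * p - 1) ^ g.1.val) * PZ n (2 * p) ^ g.1.val

/-- Truncated symmetry `U_{[p,q]}((a,b)) = ∏_{r=p+1}^{q-1} X_{2r-1}^a X_{2r}^b`. -/
def Ustr (n : ℕ) [NeZero n] (p q : ℕ) (g : G2) : Op n :=
  ((List.range (q - (p + 1))).map
    (fun r => PX n (2 * (p + 1 + r) - 1) ^ g.1.val * PX n (2 * (p + 1 + r)) ^ g.2.val)).prod

/-- The string order parameter `S_{[p,q]}(g) = V^L_p(g) · U_{[p,q]}(g) · V^R_q(g)`. -/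
def SOPm (n : ℕ) [NeZero n] (p q : ℕ) (g : G2) : Op n :=
  VL n p g * Ustr n p q g * VR n q g

/-- The twisted string order parameter
`T_{[p,q]}^{(g,h)} = V^R_q(g) · U(h) · V^L_p(g) · U_{[p,q]}(g)`. -/
def TSOP (n : ℕ) [NeZero n] (p q : ℕ) (g h : G2) : Op n :=
  VR n q g * Usym n h * VL n p g * Ustr n p q g

/-- The triangle-game winning operator
`O_{g,h} = (1/32)(12·1 + 12 U(g) + U(h) + U(gh) − 3T − 3U(g)T)` with `T = T_{[1,n/6+1]}^{(g,h)}`. -/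
def Owin (n : ℕ) [NeZero n] (g h : G2) : Op n :=
  (32 : ℂ)⁻¹ • (12 • (1 : Op n) + 12 • Usym n g + Usym n h + Usym n (g + h)
    - 3 • TSOP n 1 (n / 6 + 1) g h - 3 • (Usym n g * TSOP n 1 (n / 6 + 1) g h))

/-- The `n`-fold tensor product `|+⟩^{⊗n}`, with all amplitudes `(1/√2)^n`. -/
def plusState (n : ℕ) : QState n := fun _ => (((Real.sqrt 2)⁻¹ : ℝ) : ℂ) ^ n

/-- The controlled-`Z` gate between (1-based, cyclic) sites `j` and `k`. -/
def CZm (n : ℕ) [NeZero n] (j k : ℕ) : Op n :=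
  Matrix.of fun s t =>
    if s = t then (if s (site n j) = 1 ∧ s (site n k) = 1 then -1 else 1) else 0

/-- The `n`-qubit cyclic cluster state `|C_n⟩ = (∏_{j=1}^n CZ_{j,j+1}) |+⟩^{⊗n}`. -/
def cluster (n : ℕ) [NeZero n] : QState n :=
  (((List.range n).map (fun j => CZm n (j + 1) (j + 2))).prod).mulVec (plusState n)

abbrev BV (n : ℕ) := Fin n → ZMod 2

def bv {n : ℕ} (s : Fin n → Fin 2) : BV n := s

def vb {n : ℕ} (s : BV n) : Fin n → Fin 2 := s

@[simp] lemma bv_vb {n} (s : BV n) : bv (vb s) = s := rfl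

@[simp] lemma vb_bv {n} (s : Fin n → Fin 2) : vb (bv s) = s := rfl

lemma bv_inj {n} {s t : Fin n → Fin 2} (h : bv s = bv t) : s = t := h

def chi (a : ZMod 2) : ℂ := if a = 0 then 1 else -1

@[simp] lemma chi_zero : chi 0 = 1 := rfl

lemma chi_add (a b : ZMod 2) : chi (a + b) = chi a * chi b := by
  have h : ∀ c : ZMod 2, c = 0 ∨ c = 1 := by decide
  rcases h a with rfl | rfl <;> rcases h b with rfl | rfl <;>
    simp [chi, show (1:ZMod 2) ≠ 0 by decide, show (1:ZMod 2) + 1 = 0 by decide]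

@[simp] lemma chi_mul_self (a : ZMod 2) : chi a * chi a = 1 := by
  have h : ∀ c : ZMod 2, c = 0 ∨ c = 1 := by decide
  rcases h a with rfl | rfl <;> simp [chi, show (1:ZMod 2) ≠ 0 by decide]

/-- Pauli string `(-1)^ε X^x Z^z`. -/

def Pstr (n : ℕ) (ε : ZMod 2) (x z : BV n) : Op n :=
  Matrix.of fun s t => if bv s = bv t + x then chi (ε + ∑ k, z k * bv t k) else 0

lemma Pstr_one (n : ℕ) : Pstr n 0 0 0 = 1 := by
  ext s t
  simp only [Pstr, Matrix.of_apply, Matrix.one_apply]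
  by_cases h : s = t
  · subst h; simp
  · rw [if_neg, if_neg h]
    intro hc
    exact h (bv_inj (by simpa using hc))

lemma Pstr_mul (n : ℕ) (ε ε' : ZMod 2) (x z x' z' : BV n) :
    Pstr n ε x z * Pstr n ε' x' z'
      = Pstr n (ε + ε' + ∑ k, z k * x' k) (x + x') (z + z') := by
  ext s t
  rw [Matrix.mul_apply]
  simp only [Pstr, Matrix.of_apply]
  rw [Finset.sum_eq_single (vb (bv t + x'))]
  · by_cases h : bv s = bv t + (x + x')
    · rw [if_pos (by rw [h, bv_vb]; ring), if_pos (by rw [bv_vb]), if_pos h]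
      rw [← chi_add]
      congr 1
      have : (∑ k, z k * (bv t k + x' k)) = (∑ k, z k * x' k) + ∑ k, z k * bv t k := by
        rw [← Finset.sum_add_distrib]; congr 1; ext k; ring
      simp only [bv_vb, Pi.add_apply, this, Finset.sum_add_distrib]
      have h2 : ∑ k, (z k + z' k) * bv t k = (∑ k, z k * bv t k) + ∑ k, z' k * bv t k := by
        rw [← Finset.sum_add_distrib]; congr 1; ext k; ring
      rw [h2]; ring
    · rw [if_neg h, if_neg, zero_mul]
      intro hc
      exact h (by rw [hc, bv_vb]; ring)
  · intro u _ hu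
    by_cases h1 : bv u = bv t + x'
    · exact absurd (bv_inj (by rw [h1, bv_vb])) hu
    · rw [if_neg h1, mul_zero]
  · simp

-- site values

lemma site_val (n : ℕ) [NeZero n] {j : ℕ} (h1 : 1 ≤ j) (h2 : j ≤ n) :
    (site n j).val = j - 1 := by
  have hn : 1 ≤ n := Nat.one_le_iff_ne_zero.2 (NeZero.ne n)
  have : j + (n - 1) = (j - 1) + n := by omega
  simp only [site, this, Nat.add_mod_right]
  exact Nat.mod_eq_of_lt (by omega)

lemma site_ne (n : ℕ) [NeZero n] {j k : ℕ} (hj1 : 1 ≤ j) (hj2 : j ≤ n)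
    (hk1 : 1 ≤ k) (hk2 : k ≤ n) (h : j ≠ k) : site n j ≠ site n k := by
  intro hc
  have := congrArg Fin.val hc
  rw [site_val n hj1 hj2, site_val n hk1 hk2] at this
  omega

-- dot product helpers

lemma dot_single_right {n : ℕ} (v : BV n) (i : Fin n) (c : ZMod 2) :
    ∑ k, v k * (Pi.single i c : BV n) k = v i * c := by
  rw [Finset.sum_eq_single i]
  · simp
  · intro k _ hk; rw [Pi.single_eq_of_ne hk, mul_zero]
  · simp

lemma dot_add_right {n : ℕ} (v u w : BV n) :
    ∑ k, v k * (u + w) k = (∑ k, v k * u k) + ∑ k, v k * w k := by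
  rw [← Finset.sum_add_distrib]; congr 1; ext k; simp [mul_add]

lemma dot_zero_right {n : ℕ} (v : BV n) : ∑ k, v k * (0 : BV n) k = 0 := by simp

-- single-site operators as Pauli strings

def b2 (a : Fin 2) : ZMod 2 := a

@[simp] lemma bv_apply {n} (s : Fin n → Fin 2) (k : Fin n) : bv s k = b2 (s k) := rfl

lemma Xmat_cases (a b : Fin 2) : Xmat a b = if b2 a = b2 b + 1 then 1 else 0 := by
  fin_cases a <;> fin_cases b <;> simp [Xmat, b2] <;> rfl

lemma Zmat_cases (a b : Fin 2) : Zmat a b = if a = b then chi (b2 b) else 0 := by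
  fin_cases a <;> fin_cases b <;> simp [Zmat, b2, chi] <;> rfl

lemma PX_eq (n : ℕ) [NeZero n] (j : ℕ) :
    PX n j = Pstr n 0 (Pi.single (site n j) 1) 0 := by
  set i := site n j
  ext s t
  simp only [PX, onSite, Pstr, Matrix.of_apply, Xmat_cases]
  by_cases h : ∀ k, k ≠ i → s k = t k
  · rw [if_pos h, one_mul]
    by_cases h2 : b2 (s i) = b2 (t i) + 1
    · rw [if_pos h2, if_pos]
      · simp
      · funext k
        by_cases hk : k = i
        · subst hk; simpa using h2
        · simp [Pi.single_eq_of_ne hk, h k hk]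
    · rw [if_neg h2, if_neg]
      intro hc
      exact h2 (by have := congrFun hc i; simpa using this)
  · rw [if_neg h, zero_mul, if_neg]
    intro hc
    apply h
    intro k hk
    have := congrFun hc k
    simp [Pi.single_eq_of_ne hk] at this
    exact this

lemma dot_single_left {n : ℕ} (v : BV n) (i : Fin n) (c : ZMod 2) :
    ∑ k, (Pi.single i c : BV n) k * v k = c * v i := by
  rw [Finset.sum_eq_single i]
  · simp
  · intro k _ hk; rw [Pi.single_eq_of_ne hk, zero_mul]
  · simp

lemma PZ_eq (n : ℕ) [NeZero n] (j : ℕ) :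
    PZ n j = Pstr n 0 0 (Pi.single (site n j) 1) := by
  set i := site n j
  ext s t
  simp only [PZ, onSite, Pstr, Matrix.of_apply, Zmat_cases]
  by_cases h : s = t
  · subst h
    rw [if_pos (fun _ _ => rfl), one_mul, if_pos rfl, if_pos (by simp)]
    rw [dot_single_left, one_mul, zero_add]
    rfl
  · have hR : ¬ (bv s = bv t + 0) := fun hc => h (bv_inj (by simpa using hc))
    rw [if_neg hR]
    by_cases h1 : ∀ k, k ≠ i → s k = t k
    · rw [if_pos h1, one_mul, if_neg]
      intro hc
      refine h (funext fun k => ?_)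
      by_cases hk : k = i
      · subst hk; exact hc
      · exact h1 k hk
    · rw [if_neg h1, zero_mul]

lemma zmod2_cases (c : ZMod 2) : c = 0 ∨ c = 1 := by revert c; decide

lemma Pstr_congr {n : ℕ} {ε ε' : ZMod 2} {x x' z z' : BV n}
    (hε : ε = ε') (hx : x = x') (hz : z = z') :
    Pstr n ε x z = Pstr n ε' x' z' := by rw [hε, hx, hz]

lemma PX_pow (n : ℕ) [NeZero n] (j : ℕ) (c : ZMod 2) :
    PX n j ^ c.val = Pstr n 0 (Pi.single (site n j) c) 0 := by
  rcases zmod2_cases c with rfl | rfl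
  · rw [show ((0:ZMod 2)).val = 0 from rfl, pow_zero, Pi.single_zero, Pstr_one]
  · rw [show ((1:ZMod 2)).val = 1 from rfl, pow_one, PX_eq]

lemma PZ_pow (n : ℕ) [NeZero n] (j : ℕ) (c : ZMod 2) :
    PZ n j ^ c.val = Pstr n 0 0 (Pi.single (site n j) c) := by
  rcases zmod2_cases c with rfl | rfl
  · rw [show ((0:ZMod 2)).val = 0 from rfl, pow_zero, Pi.single_zero, Pstr_one]
  · rw [show ((1:ZMod 2)).val = 1 from rfl, pow_one, PZ_eq]

lemma single_apply_ne {n : ℕ} [NeZero n] {j k : ℕ} (c : ZMod 2)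
    (hj1 : 1 ≤ j) (hj2 : j ≤ n) (hk1 : 1 ≤ k) (hk2 : k ≤ n) (h : j ≠ k) :
    (Pi.single (site n j) c : BV n) (site n k) = 0 := by
  apply Pi.single_eq_of_ne
  exact fun hc => (site_ne n hk1 hk2 hj1 hj2 (Ne.symm h)) hc

lemma Kstab_pow (n : ℕ) [NeZero n] {j : ℕ} (h1 : 2 ≤ j) (h2 : j + 1 ≤ n) (c : ZMod 2) :
    Kstab n j ^ c.val = Pstr n 0 (Pi.single (site n j) c)
      (Pi.single (site n (j-1)) c + Pi.single (site n (j+1)) c) := by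
  have key : Kstab n j = Pstr n 0 (Pi.single (site n j) 1)
      (Pi.single (site n (j-1)) 1 + Pi.single (site n (j+1)) 1) := by
    rw [Kstab, PZ_eq, PX_eq, PZ_eq, Pstr_mul, Pstr_mul]
    refine Pstr_congr ?_ (by abel) (by abel)
    rw [dot_zero_right, dot_single_right,
      single_apply_ne 1 (by omega) (by omega) (by omega) (by omega) (by omega)]
    ring
  rcases zmod2_cases c with rfl | rfl
  · rw [show ((0:ZMod 2)).val = 0 from rfl, pow_zero]
    simp only [Pi.single_zero, add_zero, Pstr_one]
  · rw [show ((1:ZMod 2)).val = 1 from rfl, pow_one, key]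

def sfun (g : G2) (j : ℕ) : ZMod 2 := if j % 2 = 1 then g.1 else g.2

lemma sfun_even (g : G2) {j : ℕ} (h : j % 2 = 0) : sfun g j = g.2 := by
  simp [sfun, h]

lemma sfun_odd (g : G2) {j : ℕ} (h : j % 2 = 1) : sfun g j = g.1 := by
  simp [sfun, h]

lemma sfun_period (g : G2) (j : ℕ) : sfun g (j + 2) = sfun g j := by
  simp [sfun, Nat.add_mod_right]

lemma sfun_mul_succ (g : G2) (j : ℕ) : sfun g j * sfun g (j + 1) = g.1 * g.2 := by
  rcases Nat.even_or_odd j with h | h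
  · have hj := Nat.even_iff.1 h
    rw [sfun_even g hj, sfun_odd g (by omega)]
    ring
  · have hj := Nat.odd_iff.1 h
    rw [sfun_odd g hj, sfun_even g (by omega)]

lemma dot_zero_left {n : ℕ} (v : BV n) : ∑ k, (0 : BV n) k * v k = 0 := by simp

lemma dot_sum_right {n : ℕ} (v : BV n) (S : Finset ℕ) (w : ℕ → BV n) :
    ∑ k, v k * (∑ i ∈ S, w i) k = ∑ i ∈ S, ∑ k, v k * w i k := by
  rw [Finset.sum_comm]
  congr 1; ext k
  simp [Finset.mul_sum]

@[simp] lemma two_smul_bv {n : ℕ} (v : BV n) : (2 : ℕ) • v = 0 := by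
  ext k
  have h : ∀ a : ZMod 2, a + a = 0 := by decide
  simp [two_smul, h]

lemma VL_eq (n : ℕ) [NeZero n] {p : ℕ} (hp : 1 ≤ p) (hn : 2 * p ≤ n) (g : G2) :
    VL n p g = Pstr n 0 (Pi.single (site n (2*p)) g.2)
      (Pi.single (site n (2*p-1)) g.2 + Pi.single (site n (2*p)) g.1) := by
  rw [VL, PZ_pow, PX_pow, PZ_pow, Pstr_mul, Pstr_mul]
  refine Pstr_congr ?_ (by abel) (by abel)
  rw [dot_zero_left, dot_add_right, dot_zero_right, dot_single_right,
    single_apply_ne _ (by omega) (by omega) (by omega) (by omega) (by omega)]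
  ring

lemma VR_eq (n : ℕ) [NeZero n] {q : ℕ} (hq : 1 ≤ q) (hn : 2 * q ≤ n) (g : G2) :
    VR n q g = Pstr n (g.1 * g.2) (Pi.single (site n (2*q-1)) g.1)
      (Pi.single (site n (2*q-1)) g.2 + Pi.single (site n (2*q)) g.1) := by
  rw [VR, PZ_pow, PX_pow, PZ_pow, Pstr_mul, Pstr_mul]
  refine Pstr_congr ?_ (by abel) (by abel)
  rw [dot_zero_right, dot_single_right, Pi.single_eq_same]
  ring

lemma Ustr_eq (n : ℕ) [NeZero n] (p q : ℕ) (g : G2) :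
    Ustr n p q g = Pstr n 0
      (∑ i ∈ Finset.range (2 * (q - (p+1))),
        Pi.single (site n (2*p+1+i)) (sfun g (2*p+1+i))) 0 := by
  rw [Ustr]
  generalize q - (p + 1) = M
  induction M with
  | zero => simp [Pstr_one]
  | succ M ih =>
    rw [List.range_succ, List.map_append, List.prod_append, List.map_singleton,
      List.prod_singleton, ih, PX_pow, PX_pow, Pstr_mul, Pstr_mul]
    refine Pstr_congr ?_ ?_ (by abel)
    · simp
    · have e1 : 2 * (p + 1 + M) - 1 = 2*p+1+(2*M) := by omega
      have e2 : 2 * (p + 1 + M) = 2*p+1+(2*M+1) := by omega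
      have m1 : 2 * (M+1) = (2*M) + 1 + 1 := by omega
      rw [e1, e2, m1, Finset.sum_range_succ, Finset.sum_range_succ,
        sfun_odd g (by omega), sfun_even g (by omega)]
      abel

lemma dot_add_left {n : ℕ} (v u w : BV n) :
    ∑ k, (u + w) k * v k = (∑ k, u k * v k) + ∑ k, w k * v k := by
  rw [← Finset.sum_add_distrib]; congr 1; ext k; simp [add_mul]

lemma SOPm_eq (n : ℕ) [NeZero n] {p q : ℕ} (hp : 1 ≤ p) (hpq : p < q) (hq : 2 * q ≤ n)
    (g : G2) :
    SOPm n p q g = Pstr n (g.1 * g.2)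
      (∑ i ∈ Finset.range (2 * (q - p)),
        Pi.single (site n (2*p+i)) (sfun g (2*p+i)))
      (Pi.single (site n (2*p-1)) g.2 + Pi.single (site n (2*p)) g.1
        + Pi.single (site n (2*q-1)) g.2 + Pi.single (site n (2*q)) g.1) := by
  rw [SOPm, VL_eq n hp (by omega) g, VR_eq n (by omega) hq g, Ustr_eq, Pstr_mul, Pstr_mul]
  refine Pstr_congr ?_ ?_ (by abel)
  · have hz : ∀ i ∈ Finset.range (2 * (q - (p+1))),
        (∑ k, (Pi.single (site n (2*p-1)) g.2 + Pi.single (site n (2*p)) g.1 : BV n) k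
          * (Pi.single (site n (2*p+1+i)) (sfun g (2*p+1+i)) : BV n) k) = 0 := by
      intro i hi
      rw [Finset.mem_range] at hi
      rw [dot_single_right, Pi.add_apply,
        single_apply_ne _ (by omega) (by omega) (by omega) (by omega) (by omega),
        single_apply_ne _ (by omega) (by omega) (by omega) (by omega) (by omega)]
      ring
    rw [dot_sum_right, Finset.sum_congr rfl hz, Finset.sum_const_zero, dot_single_right]
    have e1 : (Pi.single (site n (2*p-1)) g.2 : BV n) (site n (2*q-1)) = 0 :=
      single_apply_ne _ (by omega) (by omega) (by omega) (by omega) (by omega)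
    have e2 : (Pi.single (site n (2*p)) g.1 : BV n) (site n (2*q-1)) = 0 :=
      single_apply_ne _ (by omega) (by omega) (by omega) (by omega) (by omega)
    simp [e1, e2]
  · -- x component
    have hT : 2 * (q - p) = (2 * (q - (p+1)) + 1) + 1 := by omega
    rw [hT, Finset.sum_range_succ', Finset.sum_range_succ]
    have hc : ∀ i ∈ Finset.range (2 * (q - (p+1))),
        (Pi.single (site n (2*p+(i+1))) (sfun g (2*p+(i+1))) : BV n)
          = Pi.single (site n (2*p+1+i)) (sfun g (2*p+1+i)) := by
      intro i _
      rw [show 2*p+(i+1) = 2*p+1+i from by omega]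
    rw [Finset.sum_congr rfl hc,
      show 2*p+(2*(q-(p+1))+1) = 2*q-1 from by omega,
      show 2*p+0 = 2*p from rfl,
      show sfun g (2*p) = g.2 from sfun_even g (by omega),
      show sfun g (2*q-1) = g.1 from sfun_odd g (by omega)]
    abel

lemma RHS_closed (n : ℕ) [NeZero n] {p : ℕ} (hp : 1 ≤ p) (g : G2) :
    ∀ m, 2 ≤ m → 2*p + m ≤ n →
    ((List.range m).map (fun i => Kstab n (2*p+i) ^ (sfun g (2*p+i)).val)).prod
      = Pstr n ((↑(m-1) : ZMod 2) * (g.1 * g.2))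
        (∑ i ∈ Finset.range m, Pi.single (site n (2*p+i)) (sfun g (2*p+i)))
        (Pi.single (site n (2*p-1)) g.2 + Pi.single (site n (2*p)) g.1
          + Pi.single (site n (2*p+m-1)) (sfun g (2*p+m))
          + Pi.single (site n (2*p+m)) (sfun g (2*p+m-1))) := by
  intro m
  induction m with
  | zero => omega
  | succ m ih =>
    intro hm2 hmn
    rcases Nat.lt_or_ge m 2 with hm | hm
    · -- base case m+1 = 2, i.e. m = 1
      have hm1 : m = 1 := by omega
      subst hm1
      rw [show List.range 2 = [0, 1] from rfl]
      simp only [List.map_cons, List.map_nil, List.prod_cons, List.prod_nil, mul_one]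
      rw [Kstab_pow n (by omega) (by omega), Kstab_pow n (by omega) (by omega), Pstr_mul]
      simp only [show 2*p+0 = 2*p from rfl]
      rw [show (2*p+1-1 : ℕ) = 2*p from by omega,
        show (2*p+1+1:ℕ) = 2*p+2 from by omega,
        show (2*p+(1+1)-1:ℕ) = 2*p+1 from by omega,
        show (2*p+(1+1):ℕ) = 2*p+2 from by omega,
        show ((1+1-1:ℕ)) = 1 from rfl]
      refine Pstr_congr ?_ ?_ ?_
      · rw [dot_add_left, dot_single_right, dot_single_right,
          single_apply_ne _ (by omega) (by omega) (by omega) (by omega) (by omega),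
          Pi.single_eq_same, sfun_mul_succ, Nat.cast_one]
        ring
      · rw [Finset.sum_range_succ, Finset.sum_range_succ, Finset.sum_range_zero,
          show 2*p+0 = 2*p from rfl]
        abel
      · rw [show sfun g (2*p) = g.2 from sfun_even g (by omega),
          show sfun g (2*p+1) = g.1 from sfun_odd g (by omega),
          show sfun g (2*p+2) = g.2 from sfun_even g (by omega)]
        abel
    · -- inductive step
      have ihm := ih hm (by omega)
      rw [List.range_succ, List.map_append, List.prod_append, List.map_singleton,
        List.prod_singleton, ihm, Kstab_pow n (by omega) (by omega), Pstr_mul]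
      have e1 : (Pi.single (site n (2*p-1)) g.2 : BV n) (site n (2*p+m)) = 0 :=
        single_apply_ne _ (by omega) (by omega) (by omega) (by omega) (by omega)
      have e2 : (Pi.single (site n (2*p)) g.1 : BV n) (site n (2*p+m)) = 0 :=
        single_apply_ne _ (by omega) (by omega) (by omega) (by omega) (by omega)
      have e3 : (Pi.single (site n (2*p+m-1)) (sfun g (2*p+m)) : BV n) (site n (2*p+m)) = 0 :=
        single_apply_ne _ (by omega) (by omega) (by omega) (by omega) (by omega)
      have hs := sfun_mul_succ g (2*p+m-1)
      rw [show 2*p+m-1+1 = 2*p+m from by omega] at hs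
      have hcast : ((m : ℕ) : ZMod 2) = ↑(m-1) + 1 := by
        conv_lhs => rw [show m = m-1+1 from by omega]
        push_cast
        ring
      refine Pstr_congr ?_ ?_ ?_
      · rw [dot_single_right, Pi.add_apply, Pi.add_apply, Pi.add_apply, e1, e2, e3,
          Pi.single_eq_same, Nat.add_sub_cancel, hcast]
        simp only [zero_add, add_zero]
        rw [hs]
        ring
      · rw [Finset.sum_range_succ]
      · have hsf : sfun g (2*p+(m+1)) = sfun g (2*p+m-1) := by
          rw [show 2*p+(m+1) = (2*p+m-1)+2 from by omega, sfun_period]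
        rw [show 2*p+(m+1)-1 = 2*p+m from by omega, hsf,
          show 2*p+(m+1) = 2*p+m+1 from by omega]
        abel_nf
        have h2 : (2 : BV n) = 0 := by ext k; show (2 : ZMod 2) = 0; decide
        simp [h2]

lemma fin2_cases : ∀ a : Fin 2, a = 0 ∨ a = 1 := by decide

def czw (n : ℕ) [NeZero n] (j k : ℕ) (s : Fin n → Fin 2) : ℂ :=
  chi (bv s (site n j) * bv s (site n k))

lemma add_add_self {n : ℕ} (v x : BV n) : v + x + x = v := by
  ext k
  have h : ∀ a b : ZMod 2, a + b + b = a := by decide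
  exact h _ _

lemma CZm_diag (n : ℕ) [NeZero n] (j k : ℕ) :
    CZm n j k = Matrix.diagonal (czw n j k) := by
  have b20 : b2 0 = 0 := by decide
  have b21 : b2 1 = 1 := by decide
  ext s t
  rw [CZm, Matrix.of_apply, Matrix.diagonal_apply]
  by_cases h : s = t
  · subst h
    rw [if_pos rfl, if_pos rfl, czw]
    simp only [bv_apply]
    rcases fin2_cases (s (site n j)) with ha | ha <;>
      rcases fin2_cases (s (site n k)) with hb | hb <;>
      rw [ha, hb] <;> simp [b20, b21, chi]
  · rw [if_neg h, if_neg h]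

lemma listprod_diag {n : ℕ} (l : List ℕ) (d : ℕ → (Fin n → Fin 2) → ℂ) :
    ((l.map (fun a => Matrix.diagonal (d a))).prod : Op n)
      = Matrix.diagonal (fun s => (l.map (fun a => d a s)).prod) := by
  induction l with
  | nil => simp [Matrix.diagonal_one]
  | cons a l ih =>
    simp only [List.map_cons, List.prod_cons, ih, Matrix.diagonal_mul_diagonal]

lemma cluster_apply (n : ℕ) [NeZero n] (s : Fin n → Fin 2) :
    cluster n s = (∏ j ∈ Finset.range n, czw n (j+1) (j+2) s) * plusState n s := by
  rw [cluster]
  have h1 : ((List.range n).map (fun j => CZm n (j + 1) (j + 2))).prod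
      = Matrix.diagonal (fun t => ((List.range n).map (fun j => czw n (j+1) (j+2) t)).prod) := by
    rw [show (fun j => CZm n (j + 1) (j + 2)) = fun j => Matrix.diagonal (czw n (j+1) (j+2))
      from funext fun j => CZm_diag n (j+1) (j+2)]
    exact listprod_diag _ _
  rw [h1, Matrix.mulVec_diagonal]
  congr 1

lemma Pstr_mulVec {n : ℕ} (ε : ZMod 2) (x z : BV n) (ψ : QState n) (s : Fin n → Fin 2) :
    (Pstr n ε x z).mulVec ψ s
      = chi (ε + ∑ k, z k * (bv s + x) k) * ψ (vb (bv s + x)) := by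
  rw [Matrix.mulVec, dotProduct]
  rw [Finset.sum_eq_single (vb (bv s + x))]
  · rw [Pstr, Matrix.of_apply,
      if_pos (show bv s = bv (vb (bv s + x)) + x by
        rw [bv_vb]; exact (add_add_self (bv s) x).symm)]
    rfl
  · intro t _ ht
    rw [Pstr, Matrix.of_apply, if_neg, zero_mul]
    intro hc
    apply ht
    have hb : bv t = bv s + x := by rw [hc]; exact (add_add_self (bv t) x).symm
    exact congrArg vb hb
  · simp

lemma site_wrap (n : ℕ) [NeZero n] : site n (n+1) = site n 1 := by
  have hn : 1 ≤ n := Nat.one_le_iff_ne_zero.2 (NeZero.ne n)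
  apply Fin.ext
  simp only [site]
  rw [show n+1+(n-1) = 2*n from by omega, show 1+(n-1) = n from by omega,
    Nat.mul_mod_left, Nat.mod_self]

lemma chi_key (a b c : ZMod 2) (R C : ℂ) :
    chi (a + c) * (chi (a * (b+1)) * (chi ((b+1) * c) * R) * C)
      = chi (a*b) * (chi (b*c) * R) * C := by
  have h : chi (a + c) * chi (a * (b+1)) * chi ((b+1) * c) = chi (a*b) * chi (b*c) := by
    have h2 : ∀ a b c : ZMod 2, a + c + a*(b+1) + (b+1)*c = a*b + b*c := by decide
    rw [← chi_add, ← chi_add, ← chi_add]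
    congr 1
    exact h2 a b c
  linear_combination R * C * h

lemma Kstab_stab (n : ℕ) [NeZero n] (hn : 3 ≤ n) {j : ℕ} (h1 : 2 ≤ j) (h2 : j+1 ≤ n)
    (c : ZMod 2) : (Kstab n j ^ c.val).mulVec (cluster n) = cluster n := by
  rcases zmod2_cases c with rfl | rfl
  · rw [show ((0:ZMod 2)).val = 0 from rfl, pow_zero, Matrix.one_mulVec]
  · have hK : Kstab n j = Pstr n 0 (Pi.single (site n j) 1)
        (Pi.single (site n (j-1)) 1 + Pi.single (site n (j+1)) 1) := by
      have h := Kstab_pow n h1 h2 1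
      rwa [show ((1:ZMod 2)).val = 1 from rfl, pow_one] at h
    rw [show ((1:ZMod 2)).val = 1 from rfl, pow_one, hK]
    funext s
    rw [Pstr_mulVec, cluster_apply, cluster_apply]
    set u := vb (bv s + Pi.single (site n j) 1) with hu
    have hbu : bv u = bv s + Pi.single (site n j) 1 := rfl
    -- the chi prefactor
    rw [dot_add_left, dot_single_left, dot_single_left, one_mul, one_mul,
      Pi.add_apply, Pi.add_apply,
      single_apply_ne _ (by omega) (by omega) (by omega) (by omega) (by omega),
      single_apply_ne _ (by omega) (by omega) (by omega) (by omega) (by omega),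
      add_zero, add_zero, zero_add]
    -- split the two affected edges out of both products
    have hr1 : j - 2 ∈ Finset.range n := Finset.mem_range.2 (by omega)
    have hr2 : j - 1 ∈ (Finset.range n).erase (j-2) := by
      rw [Finset.mem_erase, Finset.mem_range]; omega
    rw [← Finset.mul_prod_erase _ (fun r => czw n (r+1) (r+2) u) hr1,
      ← Finset.mul_prod_erase _ (fun r => czw n (r+1) (r+2) u) hr2,
      ← Finset.mul_prod_erase _ (fun r => czw n (r+1) (r+2) s) hr1,
      ← Finset.mul_prod_erase _ (fun r => czw n (r+1) (r+2) s) hr2]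
    -- unaffected edges agree
    have hcong : ∀ r ∈ ((Finset.range n).erase (j-2)).erase (j-1),
        czw n (r+1) (r+2) u = czw n (r+1) (r+2) s := by
      intro r hr
      rw [Finset.mem_erase, Finset.mem_erase, Finset.mem_range] at hr
      obtain ⟨hr1', hr2', hrn⟩ := hr
      have key : ∀ i : Fin n, i ≠ site n j → bv u i = bv s i := by
        intro i hi
        rw [hbu, Pi.add_apply, Pi.single_eq_of_ne hi, add_zero]
      have k1 : site n (r+1) ≠ site n j :=
        site_ne n (by omega) (by omega) (by omega) (by omega) (by omega)
      have k2 : site n (r+2) ≠ site n j := by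
        rcases Nat.lt_or_ge (r+2) (n+1) with hlt | hge
        · exact site_ne n (by omega) (by omega) (by omega) (by omega) (by omega)
        · have : r + 2 = n + 1 := by omega
          rw [this, site_wrap]
          exact site_ne n (by omega) (by omega) (by omega) (by omega) (by omega)
      rw [czw, czw, key _ k1, key _ k2]
    rw [Finset.prod_congr rfl hcong]
    -- the two affected edges
    have e1 : czw n (j-2+1) (j-2+2) u
        = chi (bv s (site n (j-1)) * (bv s (site n j) + 1)) := by
      rw [czw, show j-2+1 = j-1 from by omega, show j-2+2 = j from by omega, hbu
        , Pi.add_apply, Pi.add_apply,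
        single_apply_ne _ (by omega) (by omega) (by omega) (by omega) (by omega),
        Pi.single_eq_same, add_zero]
    have e2 : czw n (j-1+1) (j-1+2) u
        = chi ((bv s (site n j) + 1) * bv s (site n (j+1))) := by
      rw [czw, show j-1+1 = j from by omega, show j-1+2 = j+1 from by omega, hbu,
        Pi.add_apply, Pi.add_apply, Pi.single_eq_same,
        single_apply_ne _ (by omega) (by omega) (by omega) (by omega) (by omega),
        add_zero]
    have e1s : czw n (j-2+1) (j-2+2) s
        = chi (bv s (site n (j-1)) * bv s (site n j)) := by
      rw [czw, show j-2+1 = j-1 from by omega, show j-2+2 = j from by omega]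
    have e2s : czw n (j-1+1) (j-1+2) s
        = chi (bv s (site n j) * bv s (site n (j+1))) := by
      rw [czw, show j-1+1 = j from by omega, show j-1+2 = j+1 from by omega]
    rw [e1, e2, e1s, e2s]
    simp only [plusState, zero_add]
    exact chi_key _ _ _ _ _

lemma list_stab {n : ℕ} (ψ : QState n) :
    ∀ L : List (Op n), (∀ A ∈ L, A.mulVec ψ = ψ) → L.prod.mulVec ψ = ψ := by
  intro L
  induction L with
  | nil => intro _; simp [Matrix.one_mulVec]
  | cons A L ih =>
    intro h
    rw [List.prod_cons, ← Matrix.mulVec_mulVec, ih (fun B hB => h B (List.mem_cons_of_mem A hB)),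
      h A List.mem_cons_self]

/-- The string order parameter factorizes as an ordered product of cluster stabilizers:
`S_{[p,q]}(g) = ∏_{j=2p}^{2q−1} K_j^{s_j}` with `s_j = a` for odd `j` and `s_j = b` for even
`j`; in particular `S_{[p,q]}(g)|C_n⟩ = |C_n⟩`. -/
theorem SOP_eq_product_of_stabilizers (n : ℕ) [NeZero n] (hn : Even n) (p q : ℕ)
    (hp : 1 ≤ p) (hpq : p < q) (hq : q ≤ n / 2) (g : G2) :
    SOPm n p q g
      = ((List.range (2 * (q - p))).map
          (fun i => Kstab n (2 * p + i)
            ^ (if (2 * p + i) % 2 = 1 then g.1.val else g.2.val))).prod ∧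
    (SOPm n p q g).mulVec (cluster n) = cluster n := by
  obtain ⟨k, hk⟩ := hn
  have h2q : 2 * q ≤ n := by omega
  have hfun : (fun i => Kstab n (2*p+i) ^ (if (2*p+i) % 2 = 1 then g.1.val else g.2.val))
      = fun i => Kstab n (2*p+i) ^ (sfun g (2*p+i)).val := by
    funext i
    by_cases h : (2*p+i) % 2 = 1 <;> simp only [sfun, h, if_true, if_false]
  have hmain : SOPm n p q g
      = ((List.range (2 * (q - p))).map
          (fun i => Kstab n (2 * p + i)
            ^ (if (2 * p + i) % 2 = 1 then g.1.val else g.2.val))).prod := by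
    rw [hfun, RHS_closed n hp g (2*(q-p)) (by omega) (by omega), SOPm_eq n hp hpq h2q g]
    refine Pstr_congr ?_ rfl ?_
    · rw [← ZMod.natCast_mod, show (2*(q-p)-1) % 2 = 1 from by omega, Nat.cast_one, one_mul]
    · rw [show 2*p+2*(q-p)-1 = 2*q-1 from by omega, show 2*p+2*(q-p) = 2*q from by omega,
        show sfun g (2*q) = g.2 from sfun_even g (by omega),
        show sfun g (2*q-1) = g.1 from sfun_odd g (by omega)]
  refine ⟨hmain, ?_⟩
  rw [hmain, hfun]
  apply list_stab
  intro A hA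
  rw [List.mem_map] at hA
  obtain ⟨i, hi, rfl⟩ := hA
  rw [List.mem_range] at hi
  exact Kstab_stab n (by omega) (by omega) (by omega) _
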